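/- arXiv:2309.15396 — 2 statements merged into one kernel-verified Lean document; each statement's English description precedes it below -/
import Mathlib

section
/- For any complex polynomials P_N of degree at most D converging pointwise on ℂ to a nonzero polynomial P, and for every ε > 0 and every root λ of P of multiplicity m, there exists N₀ such that for all N ≥ N₀ the polynomial P_N has exactly m roots (counted with multiplicity) in the open disk of radius ε centered at λ, provided ε is smaller than the distance from λ to the other roots of P. -/
open Filter Topology Polynomial Metric

open scoped Classical

namespace Stmt9Aux

lemma eval_derivative_prod (S : Multiset ℂ) (a : ℂ) (z : ℂ) (h : ∀ s ∈ S, z ≠ s) :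
    eval z (derivative (C a * (S.map (fun s => X - C s)).prod))
      = eval z (C a * (S.map (fun s => X - C s)).prod) * (S.map (fun s => (z - s)⁻¹)).sum := by
  induction S using Multiset.induction with
  | empty => simp
  | cons s S ih =>
    have hz : z ≠ s := h s (Multiset.mem_cons_self _ _)
    have hS : ∀ t ∈ S, z ≠ t := fun t ht => h t (Multiset.mem_cons_of_mem ht)
    have hzs : (z - s) ≠ 0 := sub_ne_zero.2 hz
    set Qp := C a * (S.map (fun t => X - C t)).prod with hQ
    have hrw : C a * (((s ::ₘ S)).map (fun t => X - C t)).prod = (X - C s) * Qp := by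
      rw [Multiset.map_cons, Multiset.prod_cons, hQ]; ring
    rw [hrw, derivative_mul, Multiset.map_cons, Multiset.sum_cons]
    simp only [derivative_sub, derivative_X, derivative_C, sub_zero, eval_add, eval_mul, eval_sub,
      eval_X, eval_C, eval_one, one_mul]
    rw [ih hS]
    field_simp

lemma integral_sub_inv_of_not_mem (c s : ℂ) {R : ℝ} (hR : 0 ≤ R) (hs : R < dist s c) :
    (∮ z in C(c, R), (z - s)⁻¹) = 0 := by
  have hne : ∀ z ∈ closedBall c R, z ≠ s := by
    intro z hz he
    rw [mem_closedBall] at hz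
    exact absurd (he ▸ hz) (not_le.2 hs)
  apply Complex.circleIntegral_eq_zero_of_differentiable_on_off_countable hR Set.countable_empty
  · exact fun z hz =>
      ((continuousAt_id.sub continuousAt_const).inv₀
        (sub_ne_zero.2 (hne z hz))).continuousWithinAt
  · intro z hz
    exact (differentiableAt_id.sub_const s).inv (sub_ne_zero.2 (hne z (ball_subset_closedBall hz.1)))

lemma contOn_inv_sphere {c s : ℂ} {R : ℝ} (hs : dist s c ≠ R) :
    ContinuousOn (fun z : ℂ => (z - s)⁻¹) (sphere c R) := by
  intro z hz
  have hzs : z ≠ s := by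
    intro he; exact hs (by rw [← he]; exact mem_sphere.1 hz)
  exact ((continuousAt_id.sub continuousAt_const).inv₀ (sub_ne_zero.2 hzs)).continuousWithinAt

lemma contOn_sum_inv (S : Multiset ℂ) (c : ℂ) (R : ℝ) (h : ∀ s ∈ S, dist s c ≠ R) :
    ContinuousOn (fun z : ℂ => (S.map (fun s => (z - s)⁻¹)).sum) (sphere c R) := by
  induction S using Multiset.induction with
  | empty => simp [continuousOn_const]
  | cons s S ih =>
    simp only [Multiset.map_cons, Multiset.sum_cons]
    exact (contOn_inv_sphere (h s (Multiset.mem_cons_self _ _))).add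
      (ih fun t ht => h t (Multiset.mem_cons_of_mem ht))

lemma integral_add' {f g : ℂ → ℂ} {c : ℂ} {R : ℝ} (hf : CircleIntegrable f c R)
    (hg : CircleIntegrable g c R) :
    (∮ z in C(c, R), (f z + g z)) = (∮ z in C(c, R), f z) + ∮ z in C(c, R), g z := by
  simp only [circleIntegral, smul_add, intervalIntegral.integral_add hf.out hg.out]

lemma circleIntegral_sum_inv (S : Multiset ℂ) (c : ℂ) {R : ℝ} (hR : 0 < R)
    (h : ∀ s ∈ S, dist s c ≠ R) :
    (∮ z in C(c, R), (S.map (fun s => (z - s)⁻¹)).sum)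
      = (2 * Real.pi * Complex.I) * ((S.filter (fun s => dist s c < R)).card : ℂ) := by
  induction S using Multiset.induction with
  | empty => simp [circleIntegral]
  | cons s S ih =>
    have hs := h s (Multiset.mem_cons_self _ _)
    have hS : ∀ t ∈ S, dist t c ≠ R := fun t ht => h t (Multiset.mem_cons_of_mem ht)
    have int1 : CircleIntegrable (fun z : ℂ => (z - s)⁻¹) c R :=
      (contOn_inv_sphere hs).circleIntegrable hR.le
    have int2 : CircleIntegrable (fun z : ℂ => (S.map (fun t => (z - t)⁻¹)).sum) c R :=
      (contOn_sum_inv S c R hS).circleIntegrable hR.le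
    have hsum : (∮ z in C(c, R), ((s ::ₘ S).map (fun t => (z - t)⁻¹)).sum)
        = (∮ z in C(c, R), (z - s)⁻¹)
          + ∮ z in C(c, R), (S.map (fun t => (z - t)⁻¹)).sum := by
      rw [← integral_add' int1 int2]
      apply circleIntegral.integral_congr hR.le
      intro z _
      simp [Multiset.map_cons, Multiset.sum_cons]
    rw [hsum, ih hS]
    rcases lt_or_gt_of_ne hs with hlt | hgt
    · rw [circleIntegral.integral_sub_inv_of_mem_ball (mem_ball.2 hlt),
        Multiset.filter_cons_of_pos (p := fun t => dist t c < R) S hlt, Multiset.card_cons]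
      push_cast; ring
    · rw [integral_sub_inv_of_not_mem c s hR.le hgt,
        Multiset.filter_cons_of_neg (p := fun t => dist t c < R) S (not_lt.2 hgt.le)]
      ring


lemma argPrinciple (Qp : Polynomial ℂ) (hQ : Qp ≠ 0) (c : ℂ) {R : ℝ} (hR : 0 < R)
    (hsph : ∀ z ∈ sphere c R, eval z Qp ≠ 0) :
    (∮ z in C(c, R), eval z (derivative Qp) / eval z Qp)
      = (2 * Real.pi * Complex.I) * ((Qp.roots.filter (fun s => dist s c < R)).card : ℂ) := by
  have hsplit : Splits Qp := IsAlgClosed.splits Qp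
  have hfac := hsplit.eq_prod_roots
  have hroots_ne : ∀ s ∈ Qp.roots, dist s c ≠ R := by
    intro s hs hd
    exact hsph s (mem_sphere.2 hd) ((mem_roots'.1 hs).2)
  have heq : Set.EqOn (fun z => eval z (derivative Qp) / eval z Qp)
      (fun z => (Qp.roots.map (fun s => (z - s)⁻¹)).sum) (sphere c R) := by
    intro z hz
    have hz1 : ∀ s ∈ Qp.roots, z ≠ s := by
      intro s hs he
      exact hsph z hz (he ▸ (mem_roots'.1 hs).2)
    have key := eval_derivative_prod Qp.roots Qp.leadingCoeff z hz1
    rw [← hfac] at key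
    simp only
    rw [key, mul_comm, mul_div_assoc, div_self (hsph z hz), mul_one]
  rw [circleIntegral.integral_congr hR.le heq, circleIntegral_sum_inv Qp.roots c hR hroots_ne]

lemma coeff_tendsto (D : ℕ) (P : Polynomial ℂ) (Q : ℕ → Polynomial ℂ)
    (hdeg : ∀ N, (Q N).natDegree ≤ D)
    (hconv : ∀ z : ℂ, Tendsto (fun N => (Q N).eval z) atTop (𝓝 (P.eval z))) :
    P.natDegree ≤ D ∧ ∀ j, Tendsto (fun N => (Q N).coeff j) atTop (𝓝 (P.coeff j)) := by
  classical
  set s : Finset ℕ := Finset.range (D + 1) with hs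
  set v : ℕ → ℂ := fun i => (i : ℂ) with hv
  have hvs : Set.InjOn v s := fun a _ b _ h => Nat.cast_injective h
  have hcard : (s.card : ℕ) = D + 1 := Finset.card_range _
  have hdegQ : ∀ N, (Q N).degree < (s.card : WithBot ℕ) := by
    intro N
    calc (Q N).degree ≤ ((Q N).natDegree : WithBot ℕ) := degree_le_natDegree
    _ ≤ (D : WithBot ℕ) := by exact_mod_cast hdeg N
    _ < (s.card : WithBot ℕ) := by rw [hcard]; exact_mod_cast Nat.lt_succ_self D
  have hQrep : ∀ N, Q N = Lagrange.interpolate s v (fun i => (Q N).eval (v i)) :=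
    fun N => Lagrange.eq_interpolate hvs (hdegQ N)
  set Rp : Polynomial ℂ := Lagrange.interpolate s v (fun i => P.eval (v i)) with hRp
  have hcoeff_interp : ∀ (r : ℕ → ℂ) (j : ℕ),
      (Lagrange.interpolate s v r).coeff j = ∑ i ∈ s, r i * (Lagrange.basis s v i).coeff j := by
    intro r j
    rw [Lagrange.interpolate_apply, finset_sum_coeff]
    exact Finset.sum_congr rfl fun i _ => coeff_C_mul _
  have hcoeffR : ∀ j, Tendsto (fun N => (Q N).coeff j) atTop (𝓝 (Rp.coeff j)) := by
    intro j
    have hfun : (fun N => (Q N).coeff j)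
        = fun N => ∑ i ∈ s, (Q N).eval (v i) * (Lagrange.basis s v i).coeff j := by
      funext N
      conv_lhs => rw [hQrep N]
      exact hcoeff_interp _ j
    rw [hfun, hRp, hcoeff_interp]
    exact tendsto_finset_sum _ fun i _ => (hconv (v i)).mul_const _
  have hRdeg : Rp.natDegree ≤ D := by
    rcases eq_or_ne Rp 0 with h0 | h0
    · simp [h0]
    · have := Lagrange.degree_interpolate_lt (fun i => P.eval (v i)) hvs
      rw [← hRp] at this
      have h2 : Rp.natDegree < D + 1 := by
        rw [← hcard]
        exact natDegree_lt_iff_degree_lt h0 |>.2 this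
      omega
  have hPR : P = Rp := by
    apply Polynomial.funext
    intro z
    refine tendsto_nhds_unique (hconv z) ?_
    have hev : ∀ N, (Q N).eval z = ∑ i ∈ Finset.range (D + 1), (Q N).coeff i * z ^ i :=
      fun N => eval_eq_sum_range' (Nat.lt_succ_of_le (hdeg N)) z
    have hevR : Rp.eval z = ∑ i ∈ Finset.range (D + 1), Rp.coeff i * z ^ i :=
      eval_eq_sum_range' (Nat.lt_succ_of_le hRdeg) z
    simp only [hev, hevR]
    exact tendsto_finset_sum _ fun i _ => (hcoeffR i).mul_const _
  exact ⟨hPR ▸ hRdeg, fun j => hPR ▸ hcoeffR j⟩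


lemma eventually_close (p : Polynomial ℂ) (q : ℕ → Polynomial ℂ) (D : ℕ) (hp : p.natDegree ≤ D)
    (hq : ∀ N, (q N).natDegree ≤ D)
    (hc : ∀ j, Tendsto (fun N => (q N).coeff j) atTop (𝓝 (p.coeff j)))
    (r : ℝ) {η : ℝ} (hη : 0 < η) :
    ∀ᶠ N in atTop, ∀ z : ℂ, ‖z‖ ≤ r → ‖eval z (q N) - eval z p‖ < η := by
  set r' : ℝ := max r 1 with hr'
  have hr'1 : (1 : ℝ) ≤ r' := le_max_right _ _
  have hr'0 : (0 : ℝ) ≤ r' := zero_le_one.trans hr'1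
  set B : ℕ → ℝ := fun N => (∑ j ∈ Finset.range (D + 1), ‖(q N).coeff j - p.coeff j‖) * r' ^ D
    with hB
  have hBtendsto : Tendsto B atTop (𝓝 0) := by
    have h1 : Tendsto (fun N => ∑ j ∈ Finset.range (D + 1), ‖(q N).coeff j - p.coeff j‖)
        atTop (𝓝 (∑ j ∈ Finset.range (D + 1), (0 : ℝ))) := by
      apply tendsto_finset_sum
      intro j _
      have := ((hc j).sub (tendsto_const_nhds (x := p.coeff j))).norm
      simpa using this
    have := h1.mul_const (r' ^ D)
    simpa using this
  filter_upwards [hBtendsto.eventually_lt_const hη] with N hN z hz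
  have hzr' : ‖z‖ ≤ r' := hz.trans (le_max_left _ _)
  have hdegsub : (q N - p).natDegree < D + 1 :=
    Nat.lt_succ_of_le ((natDegree_sub_le _ _).trans (max_le (hq N) hp))
  calc ‖eval z (q N) - eval z p‖ = ‖eval z (q N - p)‖ := by rw [eval_sub]
    _ = ‖∑ j ∈ Finset.range (D + 1), (q N - p).coeff j * z ^ j‖ := by
        rw [eval_eq_sum_range' hdegsub]
    _ ≤ ∑ j ∈ Finset.range (D + 1), ‖(q N - p).coeff j * z ^ j‖ := norm_sum_le _ _
    _ ≤ ∑ j ∈ Finset.range (D + 1), ‖(q N).coeff j - p.coeff j‖ * r' ^ D := by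
        apply Finset.sum_le_sum
        intro j hj
        rw [norm_mul, norm_pow, coeff_sub]
        refine mul_le_mul_of_nonneg_left ?_ (norm_nonneg _)
        calc ‖z‖ ^ j ≤ r' ^ j := pow_le_pow_left₀ (norm_nonneg z) hzr' j
          _ ≤ r' ^ D := pow_le_pow_right₀ hr'1 (Nat.lt_succ_iff.1 (Finset.mem_range.1 hj))
    _ = B N := (Finset.sum_mul _ _ _).symm
    _ < η := hN

end Stmt9Aux


open scoped Classical in
/-- Local root counting: if polynomials `Q N` of degree at most `D` converge pointwise on
`ℂ` to a nonzero polynomial `P`, and `lam0` is a root of `P` of multiplicity `m`, then for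
any `ε > 0` smaller than the distance from `lam0` to the other roots of `P`, eventually
`Q N` has exactly `m` roots (with multiplicity) in the open ball of radius `ε` about
`lam0`. -/
theorem stmt_9 (D : ℕ) (P : Polynomial ℂ) (Q : ℕ → Polynomial ℂ) (hP : P ≠ 0)
    (hdeg : ∀ N, (Q N).natDegree ≤ D)
    (hconv : ∀ z : ℂ, Tendsto (fun N => (Q N).eval z) atTop (𝓝 (P.eval z)))
    (lam0 : ℂ) (hroot : P.IsRoot lam0) (ε : ℝ) (hε : 0 < ε)
    (hsep : ∀ z : ℂ, P.IsRoot z → z ≠ lam0 → ε < dist lam0 z) :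
    ∃ N₀ : ℕ, ∀ N, N₀ ≤ N →
      (Multiset.filter (fun z => dist z lam0 < ε) (Q N).roots).card
        = P.rootMultiplicity lam0 := by
  classical
  obtain ⟨hPdeg, hcoeff⟩ := Stmt9Aux.coeff_tendsto D P Q hdeg hconv
  -- no roots of P on the sphere
  have hPsph : ∀ z ∈ sphere lam0 ε, eval z P ≠ 0 := by
    intro z hz h0
    rw [mem_sphere] at hz
    rcases eq_or_ne z lam0 with rfl | hne
    · rw [dist_self] at hz; linarith
    · have h1 := hsep z h0 hne
      rw [dist_comm] at h1
      linarith
  -- minimum of ‖P‖ on the sphere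
  have hsne : (sphere lam0 ε).Nonempty := NormedSpace.sphere_nonempty.2 hε.le
  obtain ⟨z₀, hz₀, hminOn⟩ := (isCompact_sphere lam0 ε).exists_isMinOn hsne
    ((P.continuous).norm.continuousOn)
  set c0 : ℝ := ‖eval z₀ P‖ with hc0def
  have hc0 : 0 < c0 := norm_pos_iff.2 (hPsph z₀ hz₀)
  have hmin : ∀ z ∈ sphere lam0 ε, c0 ≤ ‖eval z P‖ := fun z hz => hminOn hz
  -- maximum of ‖P‖ + ‖P'‖ on the sphere
  obtain ⟨w₀, hw₀, hmaxOn⟩ := (isCompact_sphere lam0 ε).exists_isMaxOn hsne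
    (((P.continuous).norm.add ((derivative P).continuous).norm).continuousOn)
  set M : ℝ := ‖eval w₀ P‖ + ‖eval w₀ (derivative P)‖ with hMdef
  have hMP : ∀ z ∈ sphere lam0 ε, ‖eval z P‖ ≤ M := fun z hz =>
    le_trans (le_add_of_nonneg_right (norm_nonneg _)) (hmaxOn hz)
  have hMP' : ∀ z ∈ sphere lam0 ε, ‖eval z (derivative P)‖ ≤ M := fun z hz =>
    le_trans (le_add_of_nonneg_left (norm_nonneg _)) (hmaxOn hz)
  have hM0 : 0 ≤ M := add_nonneg (norm_nonneg _) (norm_nonneg _)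
  -- the closeness threshold
  set δ : ℝ := min (c0 / 2) (c0 ^ 2 / (8 * (M + 1) * ε)) with hδdef
  have hδ : 0 < δ := lt_min (by positivity) (by positivity)
  -- coefficient convergence for derivatives
  have hcoeff' : ∀ j, Tendsto (fun N => (derivative (Q N)).coeff j) atTop
      (𝓝 ((derivative P).coeff j)) := by
    intro j
    simp only [coeff_derivative]
    exact (hcoeff (j + 1)).mul_const _
  have hdegP' : (derivative P).natDegree ≤ D :=
    (natDegree_derivative_le P).trans ((Nat.sub_le _ 1).trans hPdeg)
  have hdegQ' : ∀ N, (derivative (Q N)).natDegree ≤ D := fun N =>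
    (natDegree_derivative_le (Q N)).trans ((Nat.sub_le _ 1).trans (hdeg N))
  set r : ℝ := ‖lam0‖ + ε with hrdef
  have hzr : ∀ z ∈ sphere lam0 ε, ‖z‖ ≤ r := by
    intro z hz
    rw [mem_sphere] at hz
    calc ‖z‖ = ‖z - lam0 + lam0‖ := by ring_nf
      _ ≤ ‖z - lam0‖ + ‖lam0‖ := norm_add_le _ _
      _ = ε + ‖lam0‖ := by rw [← dist_eq_norm, hz]
      _ = r := by rw [hrdef]; ring
  have h1 := Stmt9Aux.eventually_close P Q D hPdeg hdeg hcoeff r hδ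
  have h2 := Stmt9Aux.eventually_close (derivative P) (fun N => derivative (Q N)) D hdegP'
    hdegQ' hcoeff' r hδ
  rw [eventually_atTop] at h1 h2
  obtain ⟨N₁, hN₁⟩ := h1
  obtain ⟨N₂, hN₂⟩ := h2
  refine ⟨max N₁ N₂, fun N hN => ?_⟩
  have hA := hN₁ N (le_trans (le_max_left _ _) hN)
  have hA' := hN₂ N (le_trans (le_max_right _ _) hN)
  -- lower bound for ‖Q N‖ on the sphere
  have hQlow : ∀ z ∈ sphere lam0 ε, c0 / 2 ≤ ‖eval z (Q N)‖ := by
    intro z hz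
    have h3 := hA z (hzr z hz)
    have h4 := hmin z hz
    have h5 : ‖eval z P‖ - ‖eval z (Q N)‖ ≤ ‖eval z (Q N) - eval z P‖ := by
      rw [norm_sub_rev]; exact norm_sub_norm_le _ _
    have hδ1 : δ ≤ c0 / 2 := min_le_left _ _
    linarith
  have hQsph : ∀ z ∈ sphere lam0 ε, eval z (Q N) ≠ 0 := by
    intro z hz h0
    have := hQlow z hz
    rw [h0, norm_zero] at this
    linarith
  have hQne : Q N ≠ 0 := by
    intro h
    exact hQsph z₀ hz₀ (by rw [h]; simp)
  -- the two circle integrals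
  have hIP := Stmt9Aux.argPrinciple P hP lam0 hε hPsph
  have hIQ := Stmt9Aux.argPrinciple (Q N) hQne lam0 hε hQsph
  -- the count for P is the multiplicity
  have hm : (Multiset.filter (fun s => dist s lam0 < ε) P.roots).card
      = P.rootMultiplicity lam0 := by
    have hfe : Multiset.filter (fun s => dist s lam0 < ε) P.roots
        = Multiset.filter (· = lam0) P.roots := by
      apply Multiset.filter_congr
      intro z hz
      constructor
      · intro hlt
        by_contra hne
        have := hsep z ((mem_roots'.1 hz).2) hne
        rw [dist_comm] at this
        linarith
      · rintro rfl
        simpa [dist_self] using hε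
    rw [hfe, Multiset.filter_eq', Multiset.card_replicate, count_roots]
  -- pointwise bound on the difference of log derivatives
  have hbound : ∀ z ∈ sphere lam0 ε,
      ‖eval z (derivative (Q N)) / eval z (Q N) - eval z (derivative P) / eval z P‖
        ≤ 1 / (2 * ε) := by
    intro z hz
    set a := eval z (derivative (Q N))
    set b := eval z (Q N)
    set cc := eval z (derivative P)
    set d := eval z P
    have hb : b ≠ 0 := hQsph z hz
    have hd : d ≠ 0 := hPsph z hz
    have hbn : c0 / 2 ≤ ‖b‖ := hQlow z hz
    have hdn : c0 ≤ ‖d‖ := hmin z hz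
    have hca : ‖a - cc‖ < δ := hA' z (hzr z hz)
    have hdb : ‖d - b‖ < δ := by rw [norm_sub_rev]; exact hA z (hzr z hz)
    have hcM : ‖cc‖ ≤ M := hMP' z hz
    have hdM : ‖d‖ ≤ M := hMP z hz
    rw [div_sub_div a cc hb hd, norm_div]
    have hnum : ‖a * d - b * cc‖ ≤ 2 * (M + 1) * δ := by
      have hsplit : a * d - b * cc = (a - cc) * d + cc * (d - b) := by ring
      rw [hsplit]
      calc ‖(a - cc) * d + cc * (d - b)‖ ≤ ‖(a - cc) * d‖ + ‖cc * (d - b)‖ := norm_add_le _ _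
        _ = ‖a - cc‖ * ‖d‖ + ‖cc‖ * ‖d - b‖ := by rw [norm_mul, norm_mul]
        _ ≤ 2 * (M + 1) * δ := by
            nlinarith [norm_nonneg (a - cc), norm_nonneg (d - b), norm_nonneg cc,
              norm_nonneg d, hca.le, hdb.le]
    have hden : c0 ^ 2 / 2 ≤ ‖b * d‖ := by
      rw [norm_mul]
      nlinarith [hc0.le]
    calc ‖a * d - b * cc‖ / ‖b * d‖ ≤ (2 * (M + 1) * δ) / (c0 ^ 2 / 2) := by
          apply div_le_div₀ (by positivity) hnum (by positivity) hden
      _ ≤ 1 / (2 * ε) := by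
          have hδ2 : δ ≤ c0 ^ 2 / (8 * (M + 1) * ε) := min_le_right _ _
          have hδ2' : δ * (8 * (M + 1) * ε) ≤ c0 ^ 2 :=
            (le_div_iff₀ (by positivity)).1 hδ2
          rw [div_le_div_iff₀ (by positivity) (by positivity)]
          nlinarith [hδ.le, hc0.le, hM0, hε.le]
  -- integrability
  have intQ : CircleIntegrable
      (fun z => eval z (derivative (Q N)) / eval z (Q N)) lam0 ε :=
    ((((Q N).derivative.continuous).continuousOn.div
      ((Q N).continuous).continuousOn hQsph)).circleIntegrable hε.le
  have intP : CircleIntegrable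
      (fun z => eval z (derivative P) / eval z P) lam0 ε :=
    (((P.derivative.continuous).continuousOn.div
      (P.continuous).continuousOn hPsph)).circleIntegrable hε.le
  -- integral comparison
  set kQ : ℕ := (Multiset.filter (fun s => dist s lam0 < ε) (Q N).roots).card with hkQ
  set kP : ℕ := (Multiset.filter (fun s => dist s lam0 < ε) P.roots).card with hkP
  have hdiff : ‖(2 * Real.pi * Complex.I) * (kQ : ℂ)
      - (2 * Real.pi * Complex.I) * (kP : ℂ)‖ ≤ 2 * Real.pi * ε * (1 / (2 * ε)) := by
    rw [← hIQ, ← hIP, ← circleIntegral.integral_sub intQ intP]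
    exact circleIntegral.norm_integral_le_of_norm_le_const hε.le hbound
  have hpi : (0:ℝ) < Real.pi := Real.pi_pos
  have hfact : ‖(2 * Real.pi * Complex.I) * (kQ : ℂ)
      - (2 * Real.pi * Complex.I) * (kP : ℂ)‖
      = (2 * Real.pi) * ‖(kQ : ℂ) - (kP : ℂ)‖ := by
    rw [← mul_sub, norm_mul]
    congr 1
    simp [Complex.norm_real, abs_of_pos hpi]
  rw [hfact] at hdiff
  have hval : 2 * Real.pi * ε * (1 / (2 * ε)) = Real.pi := by
    field_simp
  rw [hval] at hdiff
  have hhalf : ‖(kQ : ℂ) - (kP : ℂ)‖ ≤ 1 / 2 := by nlinarith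
  have hkk : kQ = kP := by
    by_contra hne
    have hzz : ((kQ : ℤ) - (kP : ℤ)) ≠ 0 := by
      intro h
      exact hne (by omega)
    have h1le : (1 : ℤ) ≤ |(kQ : ℤ) - (kP : ℤ)| := Int.one_le_abs hzz
    have h1le' : (1 : ℝ) ≤ |(kQ : ℝ) - (kP : ℝ)| := by exact_mod_cast h1le
    have hcast : ‖(kQ : ℂ) - (kP : ℂ)‖ = |(kQ : ℝ) - (kP : ℝ)| := by
      rw [show ((kQ : ℂ) - (kP : ℂ)) = (((kQ : ℝ) - (kP : ℝ) : ℝ) : ℂ) by push_cast; ring]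
      exact Complex.norm_real _
    rw [hcast] at hhalf
    linarith
  exact hkk.trans hm
end

section
/- Let := diag(α₁, …, α_r) ∈ M_r(ℂ), B̂ := diag(β₁, …, β_s) ∈ M_s(ℂ), and Û = (u_{ij}) ∈ M_{r×s}(ℂ). Define X̃ ∈ M_{r+s}(ℂ) as the block matrix with blocks X̃₁₁ = Â, X̃₁₂ = ÂÛ, X̃₂₁ = B̂Û*, X̃₂₂ = B̂. Then the characteristic polynomial of X̃ is det(λ·I_{r+s} − X̃) = ∑_{n=0}^{min{r,s}} (−1)^n ∑_{I ⊆ [r], J ⊆ [s], #I=#J=n} ( ∏_{i ∈ [r]∖I} (λ − α_i) · ∏_{j ∈ [s]∖J} (λ − β_j) · ∏_{i∈I} α_i · ∏_{j∈J} β_j ) · |[Û]_{I,J}|². -/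
open Matrix

/-- The minor `[C]_{I,J}`: the determinant of the submatrix of `C` with rows indexed by
`I` and columns by `J` (in increasing order), defined to be `0` if `#I ≠ #J`; note
`[C]_{∅,∅} = 1`. -/
noncomputable def minorIJ {m s : ℕ} (C : Matrix (Fin m) (Fin s) ℂ)
    (I : Finset (Fin m)) (J : Finset (Fin s)) : ℂ :=
  if h : I.card = J.card then
    Matrix.det (Matrix.of fun a b : Fin I.card =>
      C (I.orderIsoOfFin rfl a) (J.orderIsoOfFin h.symm b))
  else 0

lemma det_diagonal_add {ι : Type*} [Fintype ι] [DecidableEq ι] (d : ι → ℂ) (M : Matrix ι ι ℂ) :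
    Matrix.det (Matrix.diagonal d + M) = ∑ S : Finset ι, (∏ i ∈ Sᶜ, d i) *
      Matrix.det (M.submatrix (fun i : {x // x ∈ S} => (i : ι)) (fun j : {x // x ∈ S} => (j : ι))) := by
  rw [add_comm]
  have h : Matrix.det (M + Matrix.diagonal d)
      = ∑ s : Finset ι, Matrix.det (s.piecewise (M : ι → ι → ℂ) (Matrix.diagonal d)) :=
    (Matrix.detRowAlternating (n := ι) (R := ℂ)).toMultilinearMap.map_add_univ
      M (Matrix.diagonal d)
  rw [h]
  refine Finset.sum_congr rfl fun S _ => ?_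
  set P : Matrix ι ι ℂ := fun i => S.piecewise M (fun i => Pi.single i (1:ℂ)) i with hP
  have h1 : S.piecewise (M : ι → ι → ℂ) (Matrix.diagonal d)
      = Sᶜ.piecewise (fun i => d i • P i) P := by
    ext i j
    by_cases hi : i ∈ S <;>
      simp [Finset.piecewise, P, hi, Matrix.diagonal, Pi.single_apply, eq_comm]
  have h1' : Matrix.det (S.piecewise (M : ι → ι → ℂ) (Matrix.diagonal d))
      = (∏ i ∈ Sᶜ, d i) • Matrix.det P := by
    rw [h1]
    exact (Matrix.detRowAlternating (n := ι) (R := ℂ)).toMultilinearMap.map_piecewise_smul d P Sᶜ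
  rw [h1', smul_eq_mul]
  congr 1
  let e : {x // x ∈ S} ⊕ {x // x ∉ S} ≃ ι := Equiv.sumCompl (· ∈ S)
  rw [← Matrix.det_submatrix_equiv_self e P]
  have h2 : P.submatrix e e = Matrix.fromBlocks
      (M.submatrix (fun i : {x // x ∈ S} => (i : ι)) (fun j : {x // x ∈ S} => (j : ι)))
      (M.submatrix (fun i : {x // x ∈ S} => (i : ι)) (fun j : {x // x ∉ S} => (j : ι)))
      0 1 := by
    ext i j
    rcases i with i | i <;> rcases j with j | j <;>
      simp [P, Finset.piecewise, e, Equiv.sumCompl, submatrix, i.2, Pi.single_apply,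
        Matrix.one_apply, Subtype.ext_iff, eq_comm]
    · intro h
      exact i.2 (by rw [h]; exact j.2)
  rw [h2, Matrix.det_fromBlocks_zero₂₁, Matrix.det_one, mul_one]


lemma det_J (m : Type*) [Fintype m] [DecidableEq m] :
    Matrix.det (Matrix.fromBlocks (0 : Matrix m m ℂ) (1 : Matrix m m ℂ)
      (1 : Matrix m m ℂ) (0 : Matrix m m ℂ)) = (-1 : ℂ) ^ Fintype.card m := by
  have h : (Matrix.fromBlocks (1 : Matrix m m ℂ) (1 : Matrix m m ℂ)
        (0 : Matrix m m ℂ) (1 : Matrix m m ℂ)) *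
      (Matrix.fromBlocks (0 : Matrix m m ℂ) (1 : Matrix m m ℂ)
        (1 : Matrix m m ℂ) (0 : Matrix m m ℂ)) =
      Matrix.fromBlocks (1 : Matrix m m ℂ) (1 : Matrix m m ℂ)
        (1 : Matrix m m ℂ) (0 : Matrix m m ℂ) := by
    simp [Matrix.fromBlocks_multiply]
  have h2 := congrArg Matrix.det h
  rw [Matrix.det_mul, Matrix.det_fromBlocks_zero₂₁,
    Matrix.det_fromBlocks_one₁₁] at h2
  rw [Matrix.det_one] at h2
  rw [one_mul, one_mul] at h2
  rw [h2]
  have : ((0 : Matrix m m ℂ) - 1 * 1) = -1 := by simp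
  rw [this]
  simp [Matrix.det_neg]

lemma det_antidiag_ne {m n : Type*} [Fintype m] [Fintype n] [DecidableEq m] [DecidableEq n]
    (B : Matrix m n ℂ) (C : Matrix n m ℂ) (h : Fintype.card m ≠ Fintype.card n) :
    Matrix.det (Matrix.fromBlocks 0 B C 0) = 0 := by
  rw [Matrix.det_apply]
  refine Finset.sum_eq_zero fun σ _ => ?_
  suffices hz : ∏ i, (Matrix.fromBlocks 0 B C 0) (σ i) i = 0 by simp [hz]
  by_contra hnz
  have hf : ∀ i, (Matrix.fromBlocks 0 B C 0) (σ i) i ≠ 0 := by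
    intro i hi
    exact hnz (Finset.prod_eq_zero (Finset.mem_univ i) hi)
  have hl : ∀ a : m, ∃ b : n, σ (Sum.inl a) = Sum.inr b := by
    intro a
    cases hσ : σ (Sum.inl a) with
    | inl a' => exact absurd (hf (Sum.inl a)) (by rw [hσ]; simp [Matrix.fromBlocks])
    | inr b => exact ⟨b, rfl⟩
  have hr : ∀ b : n, ∃ a : m, σ (Sum.inr b) = Sum.inl a := by
    intro b
    cases hσ : σ (Sum.inr b) with
    | inl a => exact ⟨a, rfl⟩
    | inr b' => exact absurd (hf (Sum.inr b)) (by rw [hσ]; simp [Matrix.fromBlocks])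
  have f1 : Function.Injective (fun a : m => (hl a).choose) := by
    intro a a' haa
    have haa' : (hl a).choose = (hl a').choose := haa
    have h1 := (hl a).choose_spec
    have h2 := (hl a').choose_spec
    have : Sum.inl (α := m) (β := n) a = Sum.inl a' :=
      σ.injective (by rw [h1, h2, haa'])
    exact Sum.inl.inj this
  have f2 : Function.Injective (fun b : n => (hr b).choose) := by
    intro b b' hbb
    have hbb' : (hr b).choose = (hr b').choose := hbb
    have h1 := (hr b).choose_spec
    have h2 := (hr b').choose_spec
    have : Sum.inr (α := m) (β := n) b = Sum.inr b' :=
      σ.injective (by rw [h1, h2, hbb'])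
    exact Sum.inr.inj this
  exact h (le_antisymm (Fintype.card_le_of_injective _ f1) (Fintype.card_le_of_injective _ f2))

lemma det_antidiag_eq {m : Type*} [Fintype m] [DecidableEq m] (B C : Matrix m m ℂ) :
    Matrix.det (Matrix.fromBlocks 0 B C 0) = (-1 : ℂ) ^ Fintype.card m *
      (Matrix.det B * Matrix.det C) := by
  have h : Matrix.fromBlocks (0 : Matrix m m ℂ) B C 0 =
      Matrix.fromBlocks B 0 0 C * Matrix.fromBlocks (0 : Matrix m m ℂ) (1 : Matrix m m ℂ)
        (1 : Matrix m m ℂ) (0 : Matrix m m ℂ) := by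
    simp [Matrix.fromBlocks_multiply]
  rw [h, Matrix.det_mul, Matrix.det_fromBlocks_zero₂₁, det_J]
  ring


/-- equivalence between `↥I ⊕ ↥J` and the disjoint sum finset. -/
def disjSumEquiv {a b : Type*} (I : Finset a) (J : Finset b) :
    ({x // x ∈ I} ⊕ {x // x ∈ J}) ≃ {x // x ∈ I.disjSum J} where
  toFun := Sum.elim (fun i => ⟨.inl i, by simp⟩) (fun j => ⟨.inr j, by simp⟩)
  invFun := fun x => match x with
    | ⟨.inl i, h⟩ => Sum.inl ⟨i, by simpa using h⟩
    | ⟨.inr j, h⟩ => Sum.inr ⟨j, by simpa using h⟩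
  left_inv := by rintro (i | j) <;> rfl
  right_inv := by rintro ⟨(i | j), h⟩ <;> rfl

lemma compl_disjSum {a b : Type*} [Fintype a] [Fintype b] [DecidableEq a] [DecidableEq b]
    (I : Finset a) (J : Finset b) : (I.disjSum J)ᶜ = Iᶜ.disjSum Jᶜ := by
  ext x
  cases x <;> simp

lemma prod_orderIsoOfFin {γ : Type*} [LinearOrder γ] (s : Finset γ) {k : ℕ} (h : s.card = k)
    (f : γ → ℂ) : ∏ a : Fin k, f (s.orderIsoOfFin h a) = ∏ i ∈ s, f i := by
  rw [← Finset.prod_coe_sort s f]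
  exact Fintype.prod_equiv (s.orderIsoOfFin h).toEquiv _ _ (fun a => rfl)

/-- The characteristic polynomial of the block matrix
`X̃ = [[Â, ÂÛ], [B̂Û*, B̂]]` with `Â = diag α`, `B̂ = diag β`:
`det(λI − X̃) = ∑_{n=0}^{min(r,s)} (−1)^n ∑_{#I=#J=n}
  (∏_{i∉I}(λ−α_i) ∏_{j∉J}(λ−β_j) ∏_{i∈I}α_i ∏_{j∈J}β_j) |[Û]_{I,J}|²`. -/
theorem stmt_12 (r s : ℕ) (α : Fin r → ℂ) (β : Fin s → ℂ)
    (U : Matrix (Fin r) (Fin s) ℂ) (lam : ℂ) :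
    Matrix.det (lam • (1 : Matrix (Fin r ⊕ Fin s) (Fin r ⊕ Fin s) ℂ)
        - Matrix.fromBlocks (Matrix.diagonal α) (Matrix.diagonal α * U)
            (Matrix.diagonal β * Uᴴ) (Matrix.diagonal β))
      = ∑ n ∈ Finset.Icc 0 (min r s), (-1 : ℂ) ^ n *
          ∑ I ∈ Finset.univ.filter (fun I : Finset (Fin r) => I.card = n),
            ∑ J ∈ Finset.univ.filter (fun J : Finset (Fin s) => J.card = n),
              ((∏ i ∈ Iᶜ, (lam - α i)) * (∏ j ∈ Jᶜ, (lam - β j)) *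
                (∏ i ∈ I, α i) * (∏ j ∈ J, β j)) *
                (Complex.normSq (minorIJ U I J) : ℂ) := by
  classical
  have hmat : (lam • (1 : Matrix (Fin r ⊕ Fin s) (Fin r ⊕ Fin s) ℂ)
        - Matrix.fromBlocks (Matrix.diagonal α) (Matrix.diagonal α * U)
            (Matrix.diagonal β * Uᴴ) (Matrix.diagonal β))
      = Matrix.diagonal (Sum.elim (fun i => lam - α i) (fun j => lam - β j)) +
        Matrix.fromBlocks 0 (-(Matrix.diagonal α * U)) (-(Matrix.diagonal β * Uᴴ)) 0 := by
    ext i j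
    rcases i with i | i <;> rcases j with j | j <;>
      simp [Matrix.one_apply, Matrix.diagonal, Matrix.sub_apply, Matrix.add_apply,
        Matrix.smul_apply, smul_eq_mul] <;> split_ifs <;> ring
  rw [hmat, det_diagonal_add]
  have hswap : ∀ (f : Finset (Fin r ⊕ Fin s) → ℂ),
      ∑ S : Finset (Fin r ⊕ Fin s), f S
        = ∑ I : Finset (Fin r), ∑ J : Finset (Fin s), f (I.disjSum J) := by
    intro f
    have h := Fintype.sum_equiv
      (⟨fun p => p.1.disjSum p.2, fun S => (S.toLeft, S.toRight), fun p => by simp,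
        fun S => S.toLeft_disjSum_toRight⟩ :
          (Finset (Fin r) × Finset (Fin s)) ≃ Finset (Fin r ⊕ Fin s))
      (fun p => f (p.1.disjSum p.2)) f (fun p => rfl)
    rw [← h, Fintype.sum_prod_type]
  rw [hswap]
  have key : ∀ (I : Finset (Fin r)) (J : Finset (Fin s)),
      (∏ x ∈ (I.disjSum J)ᶜ, Sum.elim (fun i => lam - α i) (fun j => lam - β j) x) *
        Matrix.det ((Matrix.fromBlocks 0 (-(Matrix.diagonal α * U))
            (-(Matrix.diagonal β * Uᴴ)) 0).submatrix
          (fun i : {x // x ∈ I.disjSum J} => (i : Fin r ⊕ Fin s))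
          (fun j : {x // x ∈ I.disjSum J} => (j : Fin r ⊕ Fin s)))
      = if I.card = J.card then
          (-1 : ℂ) ^ I.card *
            (((∏ i ∈ Iᶜ, (lam - α i)) * (∏ j ∈ Jᶜ, (lam - β j)) *
              (∏ i ∈ I, α i) * (∏ j ∈ J, β j)) * (Complex.normSq (minorIJ U I J) : ℂ))
        else 0 := by
    intro I J
    rw [compl_disjSum, Finset.prod_disjSum]
    simp only [Sum.elim_inl, Sum.elim_inr]
    by_cases hIJ : I.card = J.card
    · rw [if_pos hIJ]
      have hdet1 := (Matrix.det_submatrix_equiv_self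
        ((Equiv.sumCongr (I.orderIsoOfFin rfl).toEquiv (J.orderIsoOfFin hIJ.symm).toEquiv).trans
          (disjSumEquiv I J))
        ((Matrix.fromBlocks 0 (-(Matrix.diagonal α * U)) (-(Matrix.diagonal β * Uᴴ)) 0).submatrix
          (fun i : {x // x ∈ I.disjSum J} => (i : Fin r ⊕ Fin s))
          (fun j : {x // x ∈ I.disjSum J} => (j : Fin r ⊕ Fin s)))).symm
      rw [Matrix.submatrix_submatrix] at hdet1
      rw [hdet1]
      have hblock : ((Matrix.fromBlocks 0 (-(Matrix.diagonal α * U))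
            (-(Matrix.diagonal β * Uᴴ)) 0).submatrix
          ((fun i : {x // x ∈ I.disjSum J} => (i : Fin r ⊕ Fin s)) ∘
            ((Equiv.sumCongr (I.orderIsoOfFin rfl).toEquiv
              (J.orderIsoOfFin hIJ.symm).toEquiv).trans (disjSumEquiv I J)))
          ((fun j : {x // x ∈ I.disjSum J} => (j : Fin r ⊕ Fin s)) ∘
            ((Equiv.sumCongr (I.orderIsoOfFin rfl).toEquiv
              (J.orderIsoOfFin hIJ.symm).toEquiv).trans (disjSumEquiv I J))))
          = Matrix.fromBlocks 0
              (-(Matrix.diagonal (fun a : Fin I.card => α (I.orderIsoOfFin rfl a)) *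
                (Matrix.of fun a b : Fin I.card =>
                  U (I.orderIsoOfFin rfl a) (J.orderIsoOfFin hIJ.symm b))))
              (-(Matrix.diagonal (fun b : Fin I.card => β (J.orderIsoOfFin hIJ.symm b)) *
                (Matrix.of fun a b : Fin I.card =>
                  U (I.orderIsoOfFin rfl a) (J.orderIsoOfFin hIJ.symm b))ᴴ))
              0 := by
        ext x y
        rcases x with x | x <;> rcases y with y | y <;>
          simp [disjSumEquiv, Matrix.fromBlocks, Matrix.diagonal_mul,
            Matrix.conjTranspose_apply, Matrix.mul_apply, Matrix.diagonal]
      rw [hblock, det_antidiag_eq, Matrix.det_neg, Matrix.det_neg, Matrix.det_mul,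
        Matrix.det_mul, Matrix.det_diagonal, Matrix.det_diagonal, Matrix.det_conjTranspose,
        prod_orderIsoOfFin I rfl α, prod_orderIsoOfFin J hIJ.symm β]
      have hminor : minorIJ U I J = Matrix.det (Matrix.of fun a b : Fin I.card =>
          U (I.orderIsoOfFin rfl a) (J.orderIsoOfFin hIJ.symm b)) := by
        rw [minorIJ, dif_pos hIJ]
      rw [hminor, ← Complex.mul_conj]
      simp only [Fintype.card_fin, Fintype.card_sum, Complex.star_def]
      have hpow : ((-1 : ℂ)) ^ (I.card * 3) = (-1 : ℂ) ^ I.card := by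
        rcases Nat.even_or_odd I.card with h | h
        · rw [(h.mul_right 3).neg_one_pow, h.neg_one_pow]
        · rw [(h.mul (⟨1, rfl⟩ : Odd 3)).neg_one_pow, h.neg_one_pow]
      ring_nf
      rw [hpow]
    · rw [if_neg hIJ]
      have hdet1 := (Matrix.det_submatrix_equiv_self
        ((Equiv.sumCongr (I.orderIsoOfFin rfl).toEquiv (J.orderIsoOfFin rfl).toEquiv).trans
          (disjSumEquiv I J))
        ((Matrix.fromBlocks 0 (-(Matrix.diagonal α * U)) (-(Matrix.diagonal β * Uᴴ)) 0).submatrix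
          (fun i : {x // x ∈ I.disjSum J} => (i : Fin r ⊕ Fin s))
          (fun j : {x // x ∈ I.disjSum J} => (j : Fin r ⊕ Fin s)))).symm
      rw [Matrix.submatrix_submatrix] at hdet1
      rw [hdet1]
      have hblock : ((Matrix.fromBlocks 0 (-(Matrix.diagonal α * U))
            (-(Matrix.diagonal β * Uᴴ)) 0).submatrix
          ((fun i : {x // x ∈ I.disjSum J} => (i : Fin r ⊕ Fin s)) ∘
            ((Equiv.sumCongr (I.orderIsoOfFin rfl).toEquiv
              (J.orderIsoOfFin rfl).toEquiv).trans (disjSumEquiv I J)))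
          ((fun j : {x // x ∈ I.disjSum J} => (j : Fin r ⊕ Fin s)) ∘
            ((Equiv.sumCongr (I.orderIsoOfFin rfl).toEquiv
              (J.orderIsoOfFin rfl).toEquiv).trans (disjSumEquiv I J))))
          = Matrix.fromBlocks 0
              (Matrix.of fun (a : Fin I.card) (b : Fin J.card) =>
                -(α (I.orderIsoOfFin rfl a) *
                  U (I.orderIsoOfFin rfl a) (J.orderIsoOfFin rfl b)))
              (Matrix.of fun (b : Fin J.card) (a : Fin I.card) =>
                -(β (J.orderIsoOfFin rfl b) *
                  (starRingEnd ℂ) (U (I.orderIsoOfFin rfl a) (J.orderIsoOfFin rfl b))))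
              0 := by
        ext x y
        rcases x with x | x <;> rcases y with y | y <;>
          simp [disjSumEquiv, Matrix.fromBlocks, Matrix.diagonal_mul,
            Matrix.conjTranspose_apply, Matrix.mul_apply, Matrix.diagonal]
      rw [hblock, det_antidiag_ne _ _ (by simpa using hIJ), mul_zero]
  have hRHS : (∑ n ∈ Finset.Icc 0 (min r s), (-1 : ℂ) ^ n *
          ∑ I ∈ Finset.univ.filter (fun I : Finset (Fin r) => I.card = n),
            ∑ J ∈ Finset.univ.filter (fun J : Finset (Fin s) => J.card = n),
              ((∏ i ∈ Iᶜ, (lam - α i)) * (∏ j ∈ Jᶜ, (lam - β j)) *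
                (∏ i ∈ I, α i) * (∏ j ∈ J, β j)) *
                (Complex.normSq (minorIJ U I J) : ℂ))
      = ∑ I : Finset (Fin r), ∑ J : Finset (Fin s),
          (if I.card = J.card then
            (-1 : ℂ) ^ I.card *
              (((∏ i ∈ Iᶜ, (lam - α i)) * (∏ j ∈ Jᶜ, (lam - β j)) *
                (∏ i ∈ I, α i) * (∏ j ∈ J, β j)) * (Complex.normSq (minorIJ U I J) : ℂ))
          else 0) := by
    simp only [Finset.sum_filter, Finset.mul_sum, mul_ite, mul_zero]
    rw [Finset.sum_comm]
    refine Finset.sum_congr rfl fun I _ => ?_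
    rw [Finset.sum_ite_eq]
    have h1 : I.card ≤ r := by simpa using Finset.card_le_univ I
    by_cases hmem : I.card ∈ Finset.Icc 0 (min r s)
    · rw [if_pos hmem]
      refine Finset.sum_congr rfl fun J _ => ?_
      by_cases hj : I.card = J.card
      · rw [if_pos hj.symm, if_pos hj]
      · rw [if_neg (fun hh => hj hh.symm), if_neg hj]
    · rw [if_neg hmem]
      symm
      refine Finset.sum_eq_zero fun J _ => ?_
      rw [if_neg]
      intro hj
      apply hmem
      have h2 : I.card ≤ s := by rw [hj]; simpa using Finset.card_le_univ J
      simp [Finset.mem_Icc, le_min_iff, h1, h2]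
  rw [hRHS]
  exact Finset.sum_congr rfl fun I _ => Finset.sum_congr rfl fun J _ => key I J
end
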